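/- Let A₀ ∈ gl(3,ℂ) be the matrix whose only nonzero row is the third row (1, i, 0), i.e. A₀ = e₃ ⊗ (e₁ + i e₂)ᵀ. Consider the left action of G = U(1) × SO(3) × SO(3) on gl(3,ℂ) given by (e^{iφ}, R₁, R₂) · A = e^{iφ} R₁ A R₂⁻¹. Then the stabilizer of A₀ in G equals the set H = {(e^{iφ}, ρ(α)J₊, ρ(φ)J̃₊) : φ, α ∈ ℝ} ∪ {(e^{iφ}, ρ(α)J₋, ρ(φ)J̃₋) : φ, α ∈ ℝ}. -/

import Mathlib

open Matrix

noncomputable section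

abbrev M3R : Type := Matrix (Fin 3) (Fin 3) ℝ
abbrev M3C : Type := Matrix (Fin 3) (Fin 3) ℂ

/-- `R ∈ SO(3)`. -/
def isSO3 (R : M3R) : Prop := R * Rᵀ = 1 ∧ R.det = 1

/-- View a real matrix as a complex matrix. -/
def toC (R : M3R) : M3C := R.map (fun x => (x : ℂ))

/-- `ρ(θ) = exp(θ ê₃)`, the rotation by angle `θ` about the third axis. -/
def rot3 (θ : ℝ) : M3R :=
  !![Real.cos θ, -Real.sin θ, 0; Real.sin θ, Real.cos θ, 0; 0, 0, 1]

/-- `J₋ = diag(1,-1,-1)`. -/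
def Jm : M3R := !![1, 0, 0; 0, -1, 0; 0, 0, -1]

/-- `J̃₋ = diag(-1,-1,1)`. -/
def Jtm : M3R := !![-1, 0, 0; 0, -1, 0; 0, 0, 1]

/-- `A₀ = e₃ ⊗ (e₁ + i e₂)ᵀ`. -/
def A0 : M3C := !![0, 0, 0; 0, 0, 0; 1, Complex.I, 0]

lemma toC_mul (A B : M3R) : toC (A * B) = toC A * toC B := by
  have : toC (A * B) = (A * B).map Complex.ofRealHom := rfl
  rw [this, Matrix.map_mul]; rfl

lemma toC_one : toC (1 : M3R) = 1 := by
  ext i j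
  simp [toC, Matrix.one_apply, apply_ite]

lemma toC_inv (R : M3R) (h : R * Rᵀ = 1) : (toC R)⁻¹ = toC Rᵀ := by
  apply inv_eq_right_inv
  rw [← toC_mul, h, toC_one]

lemma tr3 {α : Type*} (a b c d e f g h i : α) :
    (!![a,b,c;d,e,f;g,h,i])ᵀ = !![a,d,g;b,e,h;c,f,i] := by
  ext x y
  fin_cases x <;> fin_cases y <;> simp

lemma toC3 (a b c d e f g h i : ℝ) :
    toC !![a,b,c;d,e,f;g,h,i] = !![(a:ℂ),b,c;d,e,f;g,h,i] := by
  ext x y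
  fin_cases x <;> fin_cases y <;> simp [toC]

lemma rot3_mul_Jm (α : ℝ) :
    rot3 α * Jm = !![Real.cos α, Real.sin α, 0; Real.sin α, -Real.cos α, 0; 0, 0, -1] := by
  rw [rot3, Jm, Matrix.mul_fin_three]
  norm_num

lemma rot3_mul_Jtm (φ : ℝ) :
    rot3 φ * Jtm = !![-Real.cos φ, Real.sin φ, 0; -Real.sin φ, -Real.cos φ, 0; 0, 0, 1] := by
  rw [rot3, Jtm, Matrix.mul_fin_three]
  norm_num

lemma so3_aux (a b d e s : ℝ) (h1 : a^2 + b^2 = 1) (h2 : d^2 + e^2 = 1)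
    (h3 : a*d + b*e = 0) (h4 : s = 1 ∨ s = -1) (h5 : (a*e - b*d)*s = 1) :
    isSO3 !![a,b,0;d,e,0;0,0,s] := by
  constructor
  · rw [tr3, Matrix.mul_fin_three, Matrix.one_fin_three]
    ext i j
    fin_cases i <;> fin_cases j <;>
      simp [Matrix.vecHead, Matrix.vecTail] <;> rcases h4 with h4 | h4 <;> nlinarith
  · rw [Matrix.det_fin_three]
    simp [Matrix.vecHead, Matrix.vecTail]
    nlinarith

lemma isSO3_rot3 (θ : ℝ) : isSO3 (rot3 θ) := by
  rw [rot3]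
  exact so3_aux _ _ _ _ _ (by nlinarith [Real.sin_sq_add_cos_sq θ])
    (by nlinarith [Real.sin_sq_add_cos_sq θ]) (by ring) (Or.inl rfl)
    (by nlinarith [Real.sin_sq_add_cos_sq θ])

lemma isSO3_rot3_Jm (α : ℝ) : isSO3 (rot3 α * Jm) := by
  rw [rot3_mul_Jm]
  exact so3_aux _ _ _ _ _ (by nlinarith [Real.sin_sq_add_cos_sq α])
    (by nlinarith [Real.sin_sq_add_cos_sq α]) (by ring) (Or.inr rfl)
    (by nlinarith [Real.sin_sq_add_cos_sq α])

lemma isSO3_rot3_Jtm (φ : ℝ) : isSO3 (rot3 φ * Jtm) := by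
  rw [rot3_mul_Jtm]
  exact so3_aux _ _ _ _ _ (by nlinarith [Real.sin_sq_add_cos_sq φ])
    (by nlinarith [Real.sin_sq_add_cos_sq φ]) (by ring) (Or.inl rfl)
    (by nlinarith [Real.sin_sq_add_cos_sq φ])

lemma abs_eq_one_of_sq {x : ℝ} (h : x ^ 2 = 1) (h0 : 0 ≤ x) : x = 1 := by nlinarith

lemma sq_sum_zero {x y : ℝ} (h : x * x + y * y = 0) : x = 0 ∧ y = 0 :=
  ⟨by nlinarith [sq_nonneg x, sq_nonneg y], by nlinarith [sq_nonneg x, sq_nonneg y]⟩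

set_option maxHeartbeats 1000000 in
/-- The stabilizer of `A₀` in `G = U(1) × SO(3) × SO(3)` (acting by
`(e^{iφ}, R₁, R₂) · A = e^{iφ} R₁ A R₂⁻¹`) equals
`H = {(e^{iφ}, ρ(α)J₊, ρ(φ)J̃₊)} ∪ {(e^{iφ}, ρ(α)J₋, ρ(φ)J̃₋)}` (with `J₊ = J̃₊ = 1`). -/
theorem stabilizer_A0_first_regime :
    {g : ℂ × M3R × M3R |
        (‖g.1‖ = 1 ∧ isSO3 g.2.1 ∧ isSO3 g.2.2) ∧
        g.1 • (toC g.2.1 * A0 * (toC g.2.2)⁻¹) = A0} =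
    {g : ℂ × M3R × M3R | ∃ φ α : ℝ,
        g = (Complex.exp (φ * Complex.I), rot3 α, rot3 φ) ∨
        g = (Complex.exp (φ * Complex.I), rot3 α * Jm, rot3 φ * Jtm)} := by
  ext g
  obtain ⟨c, R1, R2⟩ := g
  simp only [Set.mem_setOf_eq]
  constructor
  · rintro ⟨⟨hc, ⟨h1o, h1d⟩, ⟨h2o, h2d⟩⟩, hEq⟩
    rw [toC_inv R2 h2o] at hEq
    -- entrywise equations
    have key : ∀ i j, c * ((toC R1 * A0 * toC R2ᵀ) i j) = A0 i j := by
      intro i j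
      have h := congrFun (congrFun hEq i) j
      simpa [Matrix.smul_apply] using h
    have hc0 : c ≠ 0 := by
      intro h; rw [h] at hc; simp at hc
    have e00 := key 0 0
    have e10 := key 1 0
    have e20 := key 2 0
    have e21 := key 2 1
    have e22 := key 2 2
    simp [Matrix.mul_apply, Fin.sum_univ_three, toC, A0, Matrix.transpose_apply,
      Matrix.vecHead, Matrix.vecTail] at e00 e10 e20 e21 e22
    replace e00 := e00.resolve_left hc0
    replace e10 := e10.resolve_left hc0
    replace e22 := e22.resolve_left hc0
    have e20' : c * (R1 2 2 : ℂ) * ((R2 0 0 : ℂ) + Complex.I * (R2 0 1 : ℂ)) = 1 := by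
      linear_combination e20
    have e21' : c * (R1 2 2 : ℂ) * ((R2 1 0 : ℂ) + Complex.I * (R2 1 1 : ℂ)) = Complex.I := by
      linear_combination e21
    have hw : ((R2 0 0 : ℂ) + Complex.I * (R2 0 1 : ℂ)) ≠ 0 :=
      right_ne_zero_of_mul (a := c * (R1 2 2 : ℂ)) (by rw [e20']; exact one_ne_zero)
    have h122 : (R1 2 2 : ℝ) ≠ 0 := by
      intro h
      rw [h] at e20'; simp at e20'
    have h102 : R1 0 2 = 0 := by
      have hz : ((R1 0 2 : ℂ)) * ((R2 0 0 : ℂ) + Complex.I * (R2 0 1 : ℂ)) = 0 := by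
        linear_combination e00
      rcases mul_eq_zero.mp hz with h | h
      · exact_mod_cast h
      · exact absurd h hw
    have h112 : R1 1 2 = 0 := by
      have hz : ((R1 1 2 : ℂ)) * ((R2 0 0 : ℂ) + Complex.I * (R2 0 1 : ℂ)) = 0 := by
        linear_combination e10
      rcases mul_eq_zero.mp hz with h | h
      · exact_mod_cast h
      · exact absurd h hw
    have hw2 : ((R2 2 0 : ℂ) + Complex.I * (R2 2 1 : ℂ)) = 0 := by
      have hz : ((R1 2 2 : ℂ)) * ((R2 2 0 : ℂ) + Complex.I * (R2 2 1 : ℂ)) = 0 := by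
        linear_combination e22
      rcases mul_eq_zero.mp hz with h | h
      · exact absurd h (by exact_mod_cast h122)
      · exact h
    have h220' : R2 2 0 = 0 ∧ R2 2 1 = 0 := by
      rw [Complex.ext_iff] at hw2; simpa using hw2
    obtain ⟨h220, h221⟩ := h220'
    -- real orthogonality relations
    have row1 : ∀ i j, R1 i 0 * R1 j 0 + R1 i 1 * R1 j 1 + R1 i 2 * R1 j 2 = (1 : M3R) i j := by
      intro i j; rw [← h1o]
      simp [Matrix.mul_apply, Fin.sum_univ_three, Matrix.transpose_apply]
    have col1 : ∀ i j, R1 0 i * R1 0 j + R1 1 i * R1 1 j + R1 2 i * R1 2 j = (1 : M3R) i j := by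
      intro i j; rw [← (mul_eq_one_comm.mp h1o)]
      simp [Matrix.mul_apply, Fin.sum_univ_three, Matrix.transpose_apply]
    have row2 : ∀ i j, R2 i 0 * R2 j 0 + R2 i 1 * R2 j 1 + R2 i 2 * R2 j 2 = (1 : M3R) i j := by
      intro i j; rw [← h2o]
      simp [Matrix.mul_apply, Fin.sum_univ_three, Matrix.transpose_apply]
    have c122 := col1 2 2
    have c100 := col1 0 0
    have r100 := row1 0 0
    have r101 := row1 0 1
    have r122 := row1 2 2
    have s200 := row2 0 0
    have s211 := row2 1 1
    simp [Matrix.one_apply] at c122 c100 r100 r101 r122 s200 s211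
    rw [Matrix.det_fin_three] at h1d h2d
    -- R1 2 2 = ±1 and third row/column of R1
    simp only [h102, h112, mul_zero, zero_mul, add_zero, zero_add] at c122 r100 r101 h1d
    have hee : R1 2 2 = 1 ∨ R1 2 2 = -1 := mul_self_eq_one_iff.mp c122
    obtain ⟨h120, h121⟩ : R1 2 0 = 0 ∧ R1 2 1 = 0 :=
      sq_sum_zero (by linarith [r122, c122])
    simp only [h120, h121, mul_zero, zero_mul, add_zero, zero_add] at c100 h1d
    clear key hEq row1 col1 row2 e00 e10 e20 e21 e22 hw hw2 h1o h2o r122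
    -- facts about c
    have habsc : ‖c‖ = 1 := by exact hc
    have hnorm : c.re ^ 2 + c.im ^ 2 = 1 := by
      have h := Complex.sq_norm c
      rw [habsc, Complex.normSq_apply] at h
      linear_combination -h
    have hcexp : Complex.exp (↑c.arg * Complex.I) = c := by
      have h := Complex.norm_mul_exp_arg_mul_I c
      rwa [habsc, Complex.ofReal_one, one_mul] at h
    have hcos : Real.cos c.arg = c.re := by rw [Complex.cos_arg hc0, habsc, div_one]
    have hsin : Real.sin c.arg = c.im := by rw [Complex.sin_arg, habsc, div_one]
    rcases hee with he | he
    · -- R1 2 2 = 1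
      rw [he] at e20' e21'
      rw [Complex.ext_iff] at e20' e21'
      simp [Complex.mul_re, Complex.mul_im] at e20' e21'
      have hr200 : R2 0 0 = c.re := by
        linear_combination c.re * e20'.1 + c.im * e20'.2 - R2 0 0 * hnorm
      have hr201 : R2 0 1 = -c.im := by
        linear_combination (-c.im) * e20'.1 + c.re * e20'.2 - R2 0 1 * hnorm
      have hr210 : R2 1 0 = c.im := by
        linear_combination c.re * e21'.1 + c.im * e21'.2 - R2 1 0 * hnorm
      have hr211 : R2 1 1 = c.re := by
        linear_combination (-c.im) * e21'.1 + c.re * e21'.2 - R2 1 1 * hnorm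
      have hr202 : R2 0 2 = 0 :=
        (sq_sum_zero (x := R2 0 2) (y := 0) (by
          linear_combination s200 - hnorm - (R2 0 0 + c.re) * hr200 - (R2 0 1 - c.im) * hr201)).1
      have hr212 : R2 1 2 = 0 :=
        (sq_sum_zero (x := R2 1 2) (y := 0) (by
          linear_combination s211 - hnorm - (R2 1 0 + c.im) * hr210 - (R2 1 1 + c.re) * hr211)).1
      rw [hr200, hr201, hr202, hr210, hr211, hr212, h220, h221] at h2d
      have hr222 : R2 2 2 = 1 := by
        linear_combination h2d - R2 2 2 * hnorm
      -- the angle α for R1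
      set z : ℂ := (R1 0 0 : ℂ) + (R1 1 0 : ℂ) * Complex.I with hzdef
      have hzre : z.re = R1 0 0 := by simp [hzdef]
      have hzim : z.im = R1 1 0 := by simp [hzdef]
      have habz : ‖z‖ = 1 := by
        refine abs_eq_one_of_sq ?_ (norm_nonneg z)
        rw [Complex.sq_norm, Complex.normSq_apply, hzre, hzim]
        linear_combination c100
      have hz0 : z ≠ 0 := by
        intro h; rw [h] at habz; simp at habz
      have hcosa : Real.cos z.arg = R1 0 0 := by
        rw [Complex.cos_arg hz0, habz, div_one, hzre]
      have hsina : Real.sin z.arg = R1 1 0 := by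
        rw [Complex.sin_arg, habz, div_one, hzim]
      rw [he] at h1d
      have he2 : R1 1 1 = R1 0 0 := by
        linear_combination R1 0 1 * r101 + R1 0 0 * h1d - R1 1 1 * r100
      have hd2 : R1 1 0 = -R1 0 1 := by
        linear_combination R1 0 0 * r101 - R1 0 1 * h1d - R1 1 0 * r100
      refine ⟨c.arg, z.arg, Or.inl ?_⟩
      rw [Prod.ext_iff]
      refine ⟨hcexp.symm, ?_⟩
      rw [Prod.ext_iff]
      constructor
      · ext i j
        fin_cases i <;> fin_cases j <;>
          simp [rot3, Matrix.vecHead, Matrix.vecTail] <;>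
          linarith [hcosa, hsina, hd2, he2, h102, h112, h120, h121, he]
      · ext i j
        fin_cases i <;> fin_cases j <;>
          simp [rot3, Matrix.vecHead, Matrix.vecTail] <;>
          linarith [hcos, hsin, hr200, hr201, hr202, hr210, hr211, hr212, h220, h221, hr222]
    · -- R1 2 2 = -1
      rw [he] at e20' e21'
      rw [Complex.ext_iff] at e20' e21'
      simp [Complex.mul_re, Complex.mul_im] at e20' e21'
      have hr200 : R2 0 0 = -c.re := by
        linear_combination (-c.re) * e20'.1 + (-c.im) * e20'.2 - R2 0 0 * hnorm
      have hr201 : R2 0 1 = c.im := by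
        linear_combination c.im * e20'.1 + (-c.re) * e20'.2 - R2 0 1 * hnorm
      have hr210 : R2 1 0 = -c.im := by
        linear_combination (-c.re) * e21'.1 + (-c.im) * e21'.2 - R2 1 0 * hnorm
      have hr211 : R2 1 1 = -c.re := by
        linear_combination c.im * e21'.1 + (-c.re) * e21'.2 - R2 1 1 * hnorm
      have hr202 : R2 0 2 = 0 :=
        (sq_sum_zero (x := R2 0 2) (y := 0) (by
          linear_combination s200 - hnorm - (R2 0 0 - c.re) * hr200 - (R2 0 1 + c.im) * hr201)).1
      have hr212 : R2 1 2 = 0 :=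
        (sq_sum_zero (x := R2 1 2) (y := 0) (by
          linear_combination s211 - hnorm - (R2 1 0 - c.im) * hr210 - (R2 1 1 - c.re) * hr211)).1
      rw [hr200, hr201, hr202, hr210, hr211, hr212, h220, h221] at h2d
      have hr222 : R2 2 2 = 1 := by
        linear_combination h2d - R2 2 2 * hnorm
      -- the angle α for R1
      set z : ℂ := (R1 0 0 : ℂ) + (R1 0 1 : ℂ) * Complex.I with hzdef
      have hzre : z.re = R1 0 0 := by simp [hzdef]
      have hzim : z.im = R1 0 1 := by simp [hzdef]
      have habz : ‖z‖ = 1 := by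
        refine abs_eq_one_of_sq ?_ (norm_nonneg z)
        rw [Complex.sq_norm, Complex.normSq_apply, hzre, hzim]
        linear_combination r100
      have hz0 : z ≠ 0 := by
        intro h; rw [h] at habz; simp at habz
      have hcosa : Real.cos z.arg = R1 0 0 := by
        rw [Complex.cos_arg hz0, habz, div_one, hzre]
      have hsina : Real.sin z.arg = R1 0 1 := by
        rw [Complex.sin_arg, habz, div_one, hzim]
      rw [he] at h1d
      have he2 : R1 1 1 = -R1 0 0 := by
        linear_combination R1 0 1 * r101 - R1 0 0 * h1d - R1 1 1 * r100
      have hd2 : R1 1 0 = R1 0 1 := by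
        linear_combination R1 0 0 * r101 + R1 0 1 * h1d - R1 1 0 * r100
      refine ⟨c.arg, z.arg, Or.inr ?_⟩
      rw [Prod.ext_iff]
      refine ⟨hcexp.symm, ?_⟩
      rw [Prod.ext_iff]
      constructor
      · rw [rot3_mul_Jm]
        ext i j
        fin_cases i <;> fin_cases j <;>
          simp [Matrix.vecHead, Matrix.vecTail] <;>
          linarith [hcosa, hsina, hd2, he2, h102, h112, h120, h121, he]
      · rw [rot3_mul_Jtm]
        ext i j
        fin_cases i <;> fin_cases j <;>
          simp [Matrix.vecHead, Matrix.vecTail] <;>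
          linarith [hcos, hsin, hr200, hr201, hr202, hr210, hr211, hr212, h220, h221, hr222]
  · rintro ⟨φ, α, h | h⟩ <;> rw [Prod.ext_iff, Prod.ext_iff] at h <;>
      obtain ⟨hcc, hh1, hh2⟩ := h
    · subst hcc hh1 hh2
      refine ⟨⟨?_, isSO3_rot3 α, isSO3_rot3 φ⟩, ?_⟩
      · rw [Complex.norm_exp_ofReal_mul_I]
      · rw [toC_inv _ (isSO3_rot3 φ).1]
        rw [rot3, rot3, tr3, toC3, toC3, A0, Matrix.mul_fin_three, Matrix.mul_fin_three]
        ext i j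
        fin_cases i <;> fin_cases j <;>
          simp [Matrix.smul_apply, Complex.ext_iff, Complex.exp_mul_I,
            ← Complex.ofReal_cos, ← Complex.ofReal_sin, Matrix.vecHead, Matrix.vecTail]
        all_goals first
          | rfl
          | (constructor <;> first | trivial | nlinarith [Real.sin_sq_add_cos_sq φ])
          | nlinarith [Real.sin_sq_add_cos_sq φ]
    · subst hcc hh1 hh2
      refine ⟨⟨?_, isSO3_rot3_Jm α, isSO3_rot3_Jtm φ⟩, ?_⟩
      · rw [Complex.norm_exp_ofReal_mul_I]
      · rw [toC_inv _ (isSO3_rot3_Jtm φ).1, rot3_mul_Jm, rot3_mul_Jtm]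
        rw [tr3, toC3, toC3, A0, Matrix.mul_fin_three, Matrix.mul_fin_three]
        ext i j
        fin_cases i <;> fin_cases j <;>
          simp [Matrix.smul_apply, Complex.ext_iff, Complex.exp_mul_I,
            ← Complex.ofReal_cos, ← Complex.ofReal_sin, Matrix.vecHead, Matrix.vecTail]
        all_goals first
          | rfl
          | (constructor <;> first | trivial | nlinarith [Real.sin_sq_add_cos_sq φ])
          | nlinarith [Real.sin_sq_add_cos_sq φ]
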